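/- Let k ≥ 2 be an integer and let A ⊆ [n]^k satisfy |A| ≥ 2·c_k(n). Then Γ_k(A) ≥ (|A|/(2·c_k(n)))^{k+1} · c_k(n). -/

import Mathlib

/-- The grid `{1,…,n}^k` as a finset of functions `Fin k → ℕ`. -/
def gridNk (k n : ℕ) : Finset (Fin k → ℕ) :=
  Fintype.piFinset fun _ => Finset.Icc 1 n

/-- `C` is a `k`-dimensional corner in `[n]^k`: a set of points
`{a} ∪ {a + d·eᵢ : 1 ≤ i ≤ k}` for some `a` and integer `d > 0`, all lying in the grid. -/
def IsGridCorner (k n : ℕ) (C : Finset (Fin k → ℕ)) : Prop :=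
  ∃ a : Fin k → ℕ, ∃ d : ℕ, 0 < d ∧
    C = insert a (Finset.image (fun i => Function.update a i (a i + d)) Finset.univ) ∧
    C ⊆ gridNk k n

/-- `A` is `k`-dimensional corner-free: it contains no `k`-dimensional corner. -/
def GridCornerFree (k n : ℕ) (A : Finset (Fin k → ℕ)) : Prop :=
  ∀ C : Finset (Fin k → ℕ), IsGridCorner k n C → ¬ C ⊆ A

/-- `c_k(n)`: the maximum size of a `k`-dimensional corner-free subset of `[n]^k`. -/
noncomputable def cornerFreeNumber (k n : ℕ) : ℕ :=
  sSup {m : ℕ | ∃ A : Finset (Fin k → ℕ), A ⊆ gridNk k n ∧ GridCornerFree k n A ∧ A.card = m}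

/-- `Γ_k(A)`: the number of `k`-dimensional corners contained in `A`. -/
noncomputable def cornerCount (k n : ℕ) (A : Finset (Fin k → ℕ)) : ℕ :=
  Set.ncard {C : Finset (Fin k → ℕ) | IsGridCorner k n C ∧ C ⊆ A}

/-! ### Auxiliary definitions and lemmas -/

open Classical in
/-- The finset of corners contained in `B`. -/
noncomputable def cornersIn (k n : ℕ) (B : Finset (Fin k → ℕ)) : Finset (Finset (Fin k → ℕ)) :=
  B.powerset.filter fun C => IsGridCorner k n C

lemma mem_cornersIn {k n : ℕ} {B C : Finset (Fin k → ℕ)} :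
    C ∈ cornersIn k n B ↔ IsGridCorner k n C ∧ C ⊆ B := by
  simp [cornersIn, Finset.mem_filter, Finset.mem_powerset, and_comm]

lemma cornerCount_eq (k n : ℕ) (A : Finset (Fin k → ℕ)) :
    cornerCount k n A = (cornersIn k n A).card := by
  rw [cornerCount, ← Set.ncard_coe_finset]
  congr 1
  ext C
  simp [mem_cornersIn]

lemma corner_card {k n : ℕ} {C : Finset (Fin k → ℕ)} (h : IsGridCorner k n C) :
    C.card = k + 1 := by
  obtain ⟨a, d, hd, hC, -⟩ := h
  have hinj : Function.Injective (fun i => Function.update a i (a i + d)) := by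
    intro i j hij
    by_contra hne
    have := congrFun hij i
    simp only [Function.update_self, Function.update_of_ne hne] at this
    omega
  have hnot : a ∉ Finset.image (fun i => Function.update a i (a i + d)) Finset.univ := by
    simp only [Finset.mem_image, Finset.mem_univ, true_and]
    rintro ⟨i, hi⟩
    have := congrFun hi i
    simp only [Function.update_self] at this
    omega
  rw [hC, Finset.card_insert_of_notMem hnot, Finset.card_image_of_injective _ hinj,
    Finset.card_univ, Fintype.card_fin]

lemma gridNk_card (k n : ℕ) : (gridNk k n).card = n ^ k := by
  rw [gridNk, Fintype.card_piFinset]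
  simp [Nat.card_Icc]

lemma cornerFree_card_le {k n : ℕ} {B : Finset (Fin k → ℕ)} (hB : B ⊆ gridNk k n)
    (hfree : GridCornerFree k n B) : B.card ≤ cornerFreeNumber k n := by
  apply le_csSup
  · exact ⟨(gridNk k n).card, by rintro m ⟨A, hA, -, rfl⟩; exact Finset.card_le_card hA⟩
  · exact ⟨B, hB, hfree, rfl⟩

lemma pow_le_cornerFreeNumber {k n : ℕ} (hk : 1 ≤ k) (hn : 0 < n) :
    n ^ (k - 1) ≤ cornerFreeNumber k n := by
  obtain ⟨k', rfl⟩ : ∃ k', k = k' + 1 := ⟨k - 1, by omega⟩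
  set S : Finset (Fin (k'+1) → ℕ) :=
    Fintype.piFinset (fun i : Fin (k'+1) => if i = 0 then ({1} : Finset ℕ) else Finset.Icc 1 n)
    with hS
  have hmem : ∀ x ∈ S, x 0 = 1 := by
    intro x hx
    rw [hS, Fintype.mem_piFinset] at hx
    have := hx 0
    simpa using this
  have hsub : S ⊆ gridNk (k'+1) n := by
    intro x hx
    rw [gridNk, Fintype.mem_piFinset]
    rw [hS, Fintype.mem_piFinset] at hx
    intro i
    have := hx i
    by_cases hi : i = 0
    · subst hi
      simp at this
      rw [this, Finset.mem_Icc]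
      omega
    · simpa [hi] using this
  have hfree : GridCornerFree (k'+1) n S := by
    rintro C ⟨a, d, hd, hCeq, -⟩ hCS
    have ha : a ∈ C := by rw [hCeq]; exact Finset.mem_insert_self _ _
    have hb : Function.update a 0 (a 0 + d) ∈ C := by
      rw [hCeq]
      exact Finset.mem_insert_of_mem (Finset.mem_image_of_mem _ (Finset.mem_univ 0))
    have h1 := hmem _ (hCS ha)
    have h2 := hmem _ (hCS hb)
    rw [Function.update_self] at h2
    omega
  have hcard : S.card = n ^ k' := by
    rw [hS, Fintype.card_piFinset, Fin.prod_univ_succ]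
    simp [Fin.succ_ne_zero, Nat.card_Icc]
  calc n ^ (k' + 1 - 1) = S.card := by rw [hcard]; norm_num
  _ ≤ cornerFreeNumber (k'+1) n := cornerFree_card_le hsub hfree

/-- Removal-type bound: a subset of the grid of size `> c` contains at least `|B| - c`
corners. -/
lemma removal (k n : ℕ) :
    ∀ B : Finset (Fin k → ℕ), B ⊆ gridNk k n →
      B.card ≤ (cornersIn k n B).card + cornerFreeNumber k n := by
  intro B
  induction B using Finset.strongInduction with
  | _ B ih =>
    intro hBg
    by_cases hle : B.card ≤ cornerFreeNumber k n
    · exact le_trans hle (Nat.le_add_left _ _)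
    · have hnf : ¬ GridCornerFree k n B := fun h => hle (cornerFree_card_le hBg h)
      rw [GridCornerFree] at hnf
      push_neg at hnf
      obtain ⟨C, hC, hCB⟩ := hnf
      obtain ⟨a, d, hd, hCeq, -⟩ := hC
      have hx : a ∈ C := by rw [hCeq]; exact Finset.mem_insert_self _ _
      have haB : a ∈ B := hCB hx
      have hss : B.erase a ⊂ B := Finset.erase_ssubset haB
      have h1 := ih (B.erase a) hss (le_trans (Finset.erase_subset _ _) hBg)
      have h2 : (cornersIn k n (B.erase a)).card < (cornersIn k n B).card := by
        apply Finset.card_lt_card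
        constructor
        · intro D hD
          rw [mem_cornersIn] at hD ⊢
          exact ⟨hD.1, hD.2.trans (Finset.erase_subset _ _)⟩
        · intro hsub
          have hCmem : C ∈ cornersIn k n B :=
            mem_cornersIn.2 ⟨⟨a, d, hd, hCeq, hCB.trans hBg⟩, hCB⟩
          have := hsub hCmem
          rw [mem_cornersIn] at this
          exact (Finset.notMem_erase a B) (this.2 hx)
      have h3 : (B.erase a).card + 1 = B.card := Finset.card_erase_add_one haB
      omega

lemma count_subsets {α : Type*} [DecidableEq α] (A C : Finset α) (hCA : C ⊆ A) (s : ℕ)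
    (hcs : C.card ≤ s) :
    ((A.powersetCard s).filter (fun S => C ⊆ S)).card
      = (A.card - C.card).choose (s - C.card) := by
  rw [← Finset.card_sdiff_of_subset hCA, ← Finset.card_powersetCard]
  apply Finset.card_bij' (fun S _ => S \ C) (fun T _ => T ∪ C)
  · intro S hS
    rw [Finset.mem_filter, Finset.mem_powersetCard] at hS
    rw [Finset.mem_powersetCard]
    exact ⟨Finset.sdiff_subset_sdiff hS.1.1 le_rfl,
      by rw [Finset.card_sdiff_of_subset hS.2, hS.1.2]⟩
  · intro T hT
    rw [Finset.mem_powersetCard] at hT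
    have hdisj : Disjoint T C := Finset.disjoint_of_subset_left hT.1 Finset.sdiff_disjoint
    rw [Finset.mem_filter, Finset.mem_powersetCard]
    refine ⟨⟨Finset.union_subset (hT.1.trans Finset.sdiff_subset) hCA, ?_⟩,
      Finset.subset_union_right⟩
    rw [Finset.card_union_of_disjoint hdisj, hT.2]
    omega
  · intro S hS
    rw [Finset.mem_filter] at hS
    exact Finset.sdiff_union_of_subset hS.2
  · intro T hT
    rw [Finset.mem_powersetCard] at hT
    have hdisj : Disjoint T C := Finset.disjoint_of_subset_left hT.1 Finset.sdiff_disjoint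
    rw [Finset.union_sdiff_distrib, Finset.sdiff_self, Finset.union_empty,
      Finset.sdiff_eq_self_of_disjoint hdisj]

lemma choose_ratio (m s j : ℕ) (hj : j ≤ s) (hsm : s ≤ m) :
    m ^ j * (m - j).choose (s - j) ≤ m.choose s * s ^ j := by
  induction j with
  | zero => simp
  | succ j ihj =>
    have hj' : j ≤ s := by omega
    have key : m * (m - (j+1)).choose (s - (j+1)) ≤ s * (m - j).choose (s - j) := by
      rcases Nat.eq_zero_or_pos ((m - (j+1)).choose (s - (j+1))) with h0 | hpos
      · simp [h0]
      · have hid : (m - j) * (m - (j+1)).choose (s - (j+1))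
            = (m - j).choose (s - j) * (s - j) := by
          have := Nat.add_one_mul_choose_eq (m - (j+1)) (s - (j+1))
          have e1 : m - (j+1) + 1 = m - j := by omega
          have e2 : s - (j+1) + 1 = s - j := by omega
          rwa [e1, e2] at this
        have hmul : m * (m - (j+1)).choose (s - (j+1)) * (s - j)
            ≤ s * (m - j).choose (s - j) * (s - j) := by
          calc m * (m - (j+1)).choose (s - (j+1)) * (s - j)
              = m * (s - j) * (m - (j+1)).choose (s - (j+1)) := by ring
            _ ≤ s * (m - j) * (m - (j+1)).choose (s - (j+1)) := by
                apply Nat.mul_le_mul_right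
                have hjm : j ≤ m := le_trans hj' hsm
                have : m * (s - j) ≤ s * (m - j) := by
                  zify [hj', hjm]
                  nlinarith [mul_nonneg (sub_nonneg.2 (show (s:ℤ) ≤ m by exact_mod_cast hsm))
                    (show (0:ℤ) ≤ j by positivity)]
                exact this
            _ = s * ((m - j) * (m - (j+1)).choose (s - (j+1))) := by ring
            _ = s * ((m - j).choose (s - j) * (s - j)) := by rw [hid]
            _ = s * (m - j).choose (s - j) * (s - j) := by ring
        have hsj : 0 < s - j := by omega
        exact Nat.le_of_mul_le_mul_right hmul hsj
    calc m ^ (j+1) * (m - (j+1)).choose (s - (j+1))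
        = m ^ j * (m * (m - (j+1)).choose (s - (j+1))) := by ring
      _ ≤ m ^ j * (s * (m - j).choose (s - j)) := Nat.mul_le_mul_left _ key
      _ = s * (m ^ j * (m - j).choose (s - j)) := by ring
      _ ≤ s * (m.choose s * s ^ j) := Nat.mul_le_mul_left _ (ihj hj')
      _ = m.choose s * s ^ (j+1) := by ring

open Classical in
lemma double_count (k n : ℕ) (A : Finset (Fin k → ℕ)) (hA : A ⊆ gridNk k n) (s : ℕ)
    (hs1 : k + 1 ≤ s) :
    (s - cornerFreeNumber k n) * A.card.choose s
      ≤ (cornersIn k n A).card * (A.card - (k+1)).choose (s - (k+1)) := by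
  have step1 : ∀ S ∈ A.powersetCard s,
      cornersIn k n S = (cornersIn k n A).filter (fun C => C ⊆ S) := by
    intro S hS
    rw [Finset.mem_powersetCard] at hS
    ext C
    rw [mem_cornersIn, Finset.mem_filter, mem_cornersIn]
    constructor
    · rintro ⟨h1, h2⟩
      exact ⟨⟨h1, h2.trans hS.1⟩, h2⟩
    · rintro ⟨⟨h1, -⟩, h2⟩
      exact ⟨h1, h2⟩
  calc (s - cornerFreeNumber k n) * A.card.choose s
      = ∑ _S ∈ A.powersetCard s, (s - cornerFreeNumber k n) := by
        rw [Finset.sum_const, Finset.card_powersetCard, smul_eq_mul, mul_comm]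
    _ ≤ ∑ S ∈ A.powersetCard s, (cornersIn k n S).card := by
        apply Finset.sum_le_sum
        intro S hS
        rw [Finset.mem_powersetCard] at hS
        have := removal k n S (hS.1.trans hA)
        omega
    _ = ∑ S ∈ A.powersetCard s, ∑ C ∈ cornersIn k n A, (if C ⊆ S then 1 else 0) := by
        apply Finset.sum_congr rfl
        intro S hS
        rw [step1 S hS, Finset.card_filter]
    _ = ∑ C ∈ cornersIn k n A, ∑ S ∈ A.powersetCard s, (if C ⊆ S then 1 else 0) :=
        Finset.sum_comm
    _ = ∑ C ∈ cornersIn k n A, ((A.powersetCard s).filter (fun S => C ⊆ S)).card := by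
        apply Finset.sum_congr rfl
        intro C _
        rw [Finset.card_filter]
    _ = ∑ C ∈ cornersIn k n A, (A.card - (k+1)).choose (s - (k+1)) := by
        apply Finset.sum_congr rfl
        intro C hC
        rw [mem_cornersIn] at hC
        have hcc : C.card = k + 1 := corner_card hC.1
        rw [count_subsets A C hC.2 s (by omega), hcc]
    _ = (cornersIn k n A).card * (A.card - (k+1)).choose (s - (k+1)) := by
        rw [Finset.sum_const, smul_eq_mul]

/-- Supersaturation in ratio form: if `k ≥ 2` and `A ⊆ [n]^k` has `|A| ≥ 2·c_k(n)`,
then `Γ_k(A) ≥ (|A|/(2·c_k(n)))^(k+1) · c_k(n)`. -/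
theorem corner_supersaturation_ratio (k : ℕ) (hk : 2 ≤ k)
    (n : ℕ) (hn : 0 < n) (A : Finset (Fin k → ℕ)) (hA : A ⊆ gridNk k n)
    (hcard : 2 * (cornerFreeNumber k n : ℝ) ≤ (A.card : ℝ)) :
    ((A.card : ℝ) / (2 * (cornerFreeNumber k n : ℝ))) ^ (k + 1) *
        (cornerFreeNumber k n : ℝ) ≤ (cornerCount k n A : ℝ) := by
  set c := cornerFreeNumber k n with hcdef
  set m := A.card with hmdef
  have hcm : 2 * c ≤ m := by exact_mod_cast hcard
  have hclow : n ^ (k - 1) ≤ c := pow_le_cornerFreeNumber (by omega) hn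
  have hmgrid : m ≤ n ^ k := by
    rw [hmdef, ← gridNk_card k n]
    exact Finset.card_le_card hA
  have hn2 : 2 ≤ n := by
    by_contra h
    have hn1 : n = 1 := by omega
    rw [hn1, one_pow] at hclow hmgrid
    omega
  have hc1 : 2 ^ (k - 1) ≤ c := le_trans (Nat.pow_le_pow_left hn2 _) hclow
  have hcpos : 0 < c := lt_of_lt_of_le (Nat.pow_pos (by norm_num)) hc1
  have hks : k + 1 ≤ 2 * c := by
    have h2k : 2 ^ k = 2 * 2 ^ (k - 1) := by
      conv_lhs => rw [show k = (k - 1) + 1 by omega]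
      ring
    have hk2 : k < 2 ^ k := Nat.lt_two_pow_self
    omega
  have key1 : c * m.choose (2 * c)
      ≤ (cornersIn k n A).card * (m - (k+1)).choose (2 * c - (k+1)) := by
    have := double_count k n A hA (2 * c) hks
    rwa [show 2 * c - c = c by omega] at this
  have key2 : m ^ (k+1) * (m - (k+1)).choose (2 * c - (k+1))
      ≤ m.choose (2 * c) * (2 * c) ^ (k+1) := choose_ratio m (2 * c) (k+1) hks hcm
  have hD : 0 < (m - (k+1)).choose (2 * c - (k+1)) := Nat.choose_pos (by omega)
  set Γ := (cornersIn k n A).card with hΓdef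
  set D := (m - (k+1)).choose (2 * c - (k+1))
  have key3 : c * m ^ (k+1) * D ≤ Γ * (2 * c) ^ (k+1) * D := by
    calc c * m ^ (k+1) * D = c * (m ^ (k+1) * D) := by ring
      _ ≤ c * (m.choose (2 * c) * (2 * c) ^ (k+1)) := Nat.mul_le_mul_left _ key2
      _ = (c * m.choose (2 * c)) * (2 * c) ^ (k+1) := by ring
      _ ≤ (Γ * D) * (2 * c) ^ (k+1) := Nat.mul_le_mul_right _ key1
      _ = Γ * (2 * c) ^ (k+1) * D := by ring
  have key4 : c * m ^ (k+1) ≤ Γ * (2 * c) ^ (k+1) := Nat.le_of_mul_le_mul_right key3 hD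
  have key5 : (c : ℝ) * (m : ℝ) ^ (k+1) ≤ (Γ : ℝ) * (2 * (c : ℝ)) ^ (k+1) := by
    exact_mod_cast key4
  have hspos : (0 : ℝ) < 2 * (c : ℝ) := by positivity
  rw [cornerCount_eq, ← hΓdef]
  rw [div_pow, div_mul_eq_mul_div, div_le_iff₀ (by positivity)]
  calc (m : ℝ) ^ (k+1) * (c : ℝ) = (c : ℝ) * (m : ℝ) ^ (k+1) := by ring
    _ ≤ (Γ : ℝ) * (2 * (c : ℝ)) ^ (k+1) := key5
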